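/- For Y ∈ ℝ^m_{>0}, with n = 1 + Σᵢ2nᵢ, the inequality (2/n)(2Σᵢ nᵢpᵢYᵢ − E(Y)/2)² − E(Y)²/2 − Σᵢ nᵢYᵢ²(2pᵢ − qᵢ²Yᵢ)² ≤ −( (1/√n)(Σᵢ nᵢYᵢ²(2pᵢ−qᵢ²Yᵢ)²)^{1/2} − √((n−1)/(2n)) E(Y) )² ≤ 0 holds, with equality in the first inequality (i.e. the left side equal to 0) only if Fᵢ(Y) = 0 for every i. -/

import Mathlib

set_option maxHeartbeats 1000000


open BigOperators

/-- E(Y) = Σᵢ nᵢ qᵢ² Yᵢ². -/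
def flowE (m : ℕ) (n : Fin m → ℕ) (q : Fin m → ℝ) (Y : Fin m → ℝ) : ℝ :=
  ∑ j, (n j : ℝ) * q j ^ 2 * Y j ^ 2

/-- Fᵢ(Y) = 2pᵢYᵢ − qᵢ²Yᵢ² − E(Y). -/
def flowF (m : ℕ) (n : Fin m → ℕ) (p q : Fin m → ℝ) (i : Fin m) (Y : Fin m → ℝ) : ℝ :=
  2 * p i * Y i - q i ^ 2 * Y i ^ 2 - flowE m n q Y

/-- n = 1 + Σᵢ 2nᵢ. -/
def nTot (m : ℕ) (n : Fin m → ℕ) : ℝ := 1 + ∑ i, 2 * (n i : ℝ)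

/-- the monotonicity estimate for λ̄ along the flow, with equality case. -/
theorem stmt8 (m : ℕ) (n : Fin m → ℕ) (p q : Fin m → ℝ)
    (hn : ∀ i, 0 < n i) (hp : ∀ i, 0 < p i) (hq : ∀ i, q i ≠ 0)
    (Y : Fin m → ℝ) (hpos : ∀ i, 0 < Y i) :
    ((2 / nTot m n) * (2 * (∑ i, (n i : ℝ) * p i * Y i) - flowE m n q Y / 2) ^ 2
        - (flowE m n q Y) ^ 2 / 2
        - ∑ i, (n i : ℝ) * (Y i) ^ 2 * (2 * p i - q i ^ 2 * Y i) ^ 2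
      ≤ -((1 / Real.sqrt (nTot m n)) *
            Real.sqrt (∑ i, (n i : ℝ) * (Y i) ^ 2 * (2 * p i - q i ^ 2 * Y i) ^ 2)
          - Real.sqrt ((nTot m n - 1) / (2 * nTot m n)) * flowE m n q Y) ^ 2) ∧
    (-((1 / Real.sqrt (nTot m n)) *
          Real.sqrt (∑ i, (n i : ℝ) * (Y i) ^ 2 * (2 * p i - q i ^ 2 * Y i) ^ 2)
        - Real.sqrt ((nTot m n - 1) / (2 * nTot m n)) * flowE m n q Y) ^ 2 ≤ 0) ∧
    (((2 / nTot m n) * (2 * (∑ i, (n i : ℝ) * p i * Y i) - flowE m n q Y / 2) ^ 2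
        - (flowE m n q Y) ^ 2 / 2
        - ∑ i, (n i : ℝ) * (Y i) ^ 2 * (2 * p i - q i ^ 2 * Y i) ^ 2 = 0)
      → ∀ i, flowF m n p q i Y = 0) := by
  set N := nTot m n with hNdef
  set E := flowE m n q Y with hEdef
  set S := ∑ i, (n i : ℝ) * (Y i) ^ 2 * (2 * p i - q i ^ 2 * Y i) ^ 2 with hSdef
  set T := ∑ i, (n i : ℝ) * Y i * (2 * p i - q i ^ 2 * Y i) with hTdef
  have hN1 : (1:ℝ) ≤ N := by
    have h0 : (0:ℝ) ≤ ∑ i, 2 * (n i : ℝ) := Finset.sum_nonneg fun i _ => by positivity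
    simp only [hNdef, nTot]; linarith
  have hNpos : (0:ℝ) < N := by linarith
  have hE0 : (0:ℝ) ≤ E := by
    rw [hEdef, flowE]; exact Finset.sum_nonneg fun i _ => by positivity
  have hS0 : (0:ℝ) ≤ S := by
    rw [hSdef]; exact Finset.sum_nonneg fun i _ => by positivity
  set u := Real.sqrt N with hudef
  set s := Real.sqrt S with hsdef
  set c := Real.sqrt 2 with hcdef
  set v := Real.sqrt (N - 1) with hvdef
  have hu2 : u ^ 2 = N := Real.sq_sqrt hNpos.le
  have hupos : (0:ℝ) < u := Real.sqrt_pos.2 hNpos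
  have hc2 : c ^ 2 = 2 := Real.sq_sqrt (by norm_num)
  have hcpos : (0:ℝ) < c := Real.sqrt_pos.2 (by norm_num)
  have hv2 : v ^ 2 = N - 1 := Real.sq_sqrt (by linarith)
  have hv0 : (0:ℝ) ≤ v := Real.sqrt_nonneg _
  have hs2 : s ^ 2 = S := Real.sq_sqrt hS0
  have hs0 : (0:ℝ) ≤ s := Real.sqrt_nonneg _
  have hsqrtdiv : Real.sqrt ((N - 1) / (2 * N)) = v / (c * u) := by
    rw [Real.sqrt_div (by linarith : (0:ℝ) ≤ N - 1),
      Real.sqrt_mul (by norm_num : (0:ℝ) ≤ 2)]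
  have hb : 1 / u * s - Real.sqrt ((N - 1) / (2 * N)) * E = (c * s - v * E) / (c * u) := by
    rw [hsqrtdiv]; field_simp
  have hsumn : ∑ i, (n i : ℝ) = (N - 1) / 2 := by
    have h2s : ∑ i, 2 * (n i : ℝ) = 2 * ∑ i, (n i : ℝ) := by rw [Finset.mul_sum]
    simp only [hNdef, nTot, h2s]; ring
  have hCS : T ^ 2 ≤ ((N - 1) / 2) * S := by
    have key := Finset.sum_mul_sq_le_sq_mul_sq Finset.univ (fun i => Real.sqrt (n i))
      (fun i => Real.sqrt (n i) * (Y i * (2 * p i - q i ^ 2 * Y i)))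
    have e1 : ∑ i, Real.sqrt (n i) * (Real.sqrt (n i) * (Y i * (2 * p i - q i ^ 2 * Y i))) = T := by
      rw [hTdef]; apply Finset.sum_congr rfl; intro i _
      rw [← mul_assoc, Real.mul_self_sqrt (by positivity)]; ring
    have e2 : ∑ i, (Real.sqrt (n i)) ^ 2 = (N - 1) / 2 := by
      rw [← hsumn]; apply Finset.sum_congr rfl; intro i _; exact Real.sq_sqrt (by positivity)
    have e3 : ∑ i, (Real.sqrt (n i) * (Y i * (2 * p i - q i ^ 2 * Y i))) ^ 2 = S := by
      rw [hSdef]; apply Finset.sum_congr rfl; intro i _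
      rw [mul_pow, Real.sq_sqrt (by positivity)]; ring
    rw [e1, e2, e3] at key; exact key
  have hcvs0 : (0:ℝ) ≤ c * v * s := by positivity
  have h4sq : (2 * T) ^ 2 ≤ (c * v * s) ^ 2 := by
    have h : (c * v * s) ^ 2 = 2 * (N - 1) * S := by
      rw [mul_pow, mul_pow, hc2, hv2, hs2]
    rw [h]; linarith [hCS]
  have h2T : 2 * T ≤ c * v * s := by
    calc 2 * T ≤ |2 * T| := le_abs_self _
      _ = Real.sqrt ((2 * T) ^ 2) := (Real.sqrt_sq_eq_abs _).symm
      _ ≤ Real.sqrt ((c * v * s) ^ 2) := Real.sqrt_le_sqrt h4sq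
      _ = c * v * s := Real.sqrt_sq hcvs0
  have hT' : T = 2 * (∑ i, (n i : ℝ) * p i * Y i) - E := by
    rw [hTdef, hEdef, flowE, Finset.mul_sum, ← Finset.sum_sub_distrib]
    apply Finset.sum_congr rfl; intro i _; ring
  have hA : 2 * (∑ i, (n i : ℝ) * p i * Y i) - E / 2 = T + E / 2 := by
    rw [hT']; ring
  have key' : 4 * (T + E / 2) ^ 2 ≤ E ^ 2 + 2 * (N - 1) * S + 2 * (c * v * s) * E := by
    have hm : (0:ℝ) ≤ E * (c * v * s - 2 * T) := mul_nonneg hE0 (sub_nonneg.2 h2T)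
    have e : 4 * (T + E / 2) ^ 2 = 4 * T ^ 2 + 4 * T * E + E ^ 2 := by ring
    rw [e]; linarith [hCS, hm]
  have hexp2 : (c * s - v * E) ^ 2 = 2 * S - 2 * (c * v * s) * E + (N - 1) * E ^ 2 := by
    linear_combination s ^ 2 * hc2 + E ^ 2 * hv2 + 2 * hs2
  have ineq1 : (2 / N) * (2 * (∑ i, (n i : ℝ) * p i * Y i) - E / 2) ^ 2 - E ^ 2 / 2 - S
      ≤ -(1 / u * s - Real.sqrt ((N - 1) / (2 * N)) * E) ^ 2 := by
    rw [hb, hA, div_pow]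
    have hden : (c * u) ^ 2 = 2 * N := by rw [mul_pow, hc2, hu2]
    rw [hden, ← neg_div, le_div_iff₀ (by linarith : (0:ℝ) < 2 * N)]
    have hlhs : ((2 / N) * (T + E / 2) ^ 2 - E ^ 2 / 2 - S) * (2 * N)
        = 4 * (T + E / 2) ^ 2 - N * E ^ 2 - 2 * N * S := by
      field_simp; ring
    rw [hlhs, hexp2]
    linarith [key']
  refine ⟨ineq1, neg_nonpos_of_nonneg (sq_nonneg _), ?_⟩
  intro h0 i
  have hml : (0:ℝ) < E := by
    rw [hEdef, flowE]
    refine Finset.sum_pos (fun j _ => ?_) ⟨i, Finset.mem_univ i⟩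
    have h1 : (0:ℝ) < (n j : ℝ) := by exact_mod_cast hn j
    have h2 : (0:ℝ) < q j ^ 2 := pow_two_pos_of_ne_zero (hq j)
    have h3 : (0:ℝ) < Y j ^ 2 := pow_pos (hpos j) 2
    positivity
  have hz : 1 / u * s - Real.sqrt ((N - 1) / (2 * N)) * E = 0 := by
    have h1 : (0:ℝ) ≤ -(1 / u * s - Real.sqrt ((N - 1) / (2 * N)) * E) ^ 2 := by
      rw [← h0]; exact ineq1
    have h3 := sq_nonneg (1 / u * s - Real.sqrt ((N - 1) / (2 * N)) * E)
    have h4 : (1 / u * s - Real.sqrt ((N - 1) / (2 * N)) * E) ^ 2 = 0 := by linarith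
    exact pow_eq_zero_iff (two_ne_zero) |>.mp h4
  have hcs : c * s = v * E := by
    rw [hb] at hz
    rcases div_eq_zero_iff.mp hz with h | h
    · linarith
    · exact absurd h (by positivity)
  have hSE : 2 * S = (N - 1) * E ^ 2 := by
    have h2 : (c * s) ^ 2 = (v * E) ^ 2 := by rw [hcs]
    linear_combination h2 - s ^ 2 * hc2 + E ^ 2 * hv2 - 2 * hs2
  have h4A : 4 * (T + E / 2) ^ 2 = N * E ^ 2 + 2 * N * S := by
    have h5 : ((2 / N) * (2 * (∑ i, (n i : ℝ) * p i * Y i) - E / 2) ^ 2 - E ^ 2 / 2 - S)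
        * (2 * N) = 0 := by rw [h0]; ring
    rw [hA] at h5
    have h6 : ((2 / N) * (T + E / 2) ^ 2 - E ^ 2 / 2 - S) * (2 * N)
        = 4 * (T + E / 2) ^ 2 - N * E ^ 2 - 2 * N * S := by field_simp; ring
    rw [h6] at h5; linarith
  have hNS : 2 * N * S = N * (N - 1) * E ^ 2 := by linear_combination N * hSE
  have hT2 : 4 * T ^ 2 ≤ (N - 1) ^ 2 * E ^ 2 := by
    have h7 : ((N - 1) / 2) * S = (N - 1) ^ 2 * E ^ 2 / 4 := by
      have h8 : S = (N - 1) * E ^ 2 / 2 := by linarith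
      rw [h8]; ring
    linarith [hCS]
  have h4A'' : 4 * T ^ 2 + 4 * T * E = (N ^ 2 - 1) * E ^ 2 := by
    linear_combination h4A + hNS
  have hcvs : c * v * s = (N - 1) * E := by linear_combination v * hcs + E * hv2
  have hup : 2 * T ≤ (N - 1) * E := by linarith [h2T]
  have hlow : (N - 1) * E ≤ 2 * T := by
    have h9 : ((N - 1) * E) * E ≤ (2 * T) * E := by linarith [h4A'', hT2]
    exact le_of_mul_le_mul_right h9 hml
  have hTE : 2 * T = (N - 1) * E := le_antisymm hup hlow
  have hexpand : ∑ j, (n j : ℝ) * (flowF m n p q j Y) ^ 2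
      = S - 2 * E * T + ((N - 1) / 2) * E ^ 2 := by
    have e : ∀ j ∈ Finset.univ, (n j : ℝ) * (flowF m n p q j Y) ^ 2
        = (n j : ℝ) * (Y j) ^ 2 * (2 * p j - q j ^ 2 * Y j) ^ 2
          - 2 * E * ((n j : ℝ) * Y j * (2 * p j - q j ^ 2 * Y j)) + E ^ 2 * (n j : ℝ) := by
      intro j _
      simp only [flowF, ← hEdef]
      ring
    rw [Finset.sum_congr rfl e, Finset.sum_add_distrib, Finset.sum_sub_distrib,
      ← Finset.mul_sum, ← Finset.mul_sum, ← hSdef, ← hTdef, hsumn]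
    ring
  have hsumF : ∑ j, (n j : ℝ) * (flowF m n p q j Y) ^ 2 = 0 := by
    rw [hexpand]; linear_combination hSE / 2 - E * hTE
  have hterm : (n i : ℝ) * (flowF m n p q i Y) ^ 2 = 0 :=
    (Finset.sum_eq_zero_iff_of_nonneg (fun j _ => by positivity)).mp hsumF i (Finset.mem_univ i)
  have hni : ((n i : ℝ)) ≠ 0 := by
    exact_mod_cast (hn i).ne'
  have hF2 := (mul_eq_zero.mp hterm).resolve_left hni
  exact pow_eq_zero_iff (two_ne_zero) |>.mp hF2
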